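/- In the real quaternions H, the set C* ∪ C*j is a metabelian but non-abelian maximal subgroup of H*. -/

import Mathlib

open Quaternion Real

namespace QMax

def Pc (q : ℍ[ℝ]) : Prop := q.imJ = 0 ∧ q.imK = 0
def Pj (q : ℍ[ℝ]) : Prop := q.re = 0 ∧ q.imI = 0

lemma pc_mul_pc {a b : ℍ[ℝ]} (ha : Pc a) (hb : Pc b) : Pc (a*b) := by
  obtain ⟨h1, h2⟩ := ha; obtain ⟨h3, h4⟩ := hb
  constructor <;> simp [Quaternion.imJ_mul, Quaternion.imK_mul, h1, h2, h3, h4]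

lemma pc_mul_pj {a b : ℍ[ℝ]} (ha : Pc a) (hb : Pj b) : Pj (a*b) := by
  obtain ⟨h1, h2⟩ := ha; obtain ⟨h3, h4⟩ := hb
  constructor <;> simp [Quaternion.re_mul, Quaternion.imI_mul, h1, h2, h3, h4]

lemma pj_mul_pc {a b : ℍ[ℝ]} (ha : Pj a) (hb : Pc b) : Pj (a*b) := by
  obtain ⟨h1, h2⟩ := ha; obtain ⟨h3, h4⟩ := hb
  constructor <;> simp [Quaternion.re_mul, Quaternion.imI_mul, h1, h2, h3, h4]

lemma pj_mul_pj {a b : ℍ[ℝ]} (ha : Pj a) (hb : Pj b) : Pc (a*b) := by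
  obtain ⟨h1, h2⟩ := ha; obtain ⟨h3, h4⟩ := hb
  constructor <;> simp [Quaternion.imJ_mul, Quaternion.imK_mul, h1, h2, h3, h4]

lemma pc_inv {a : ℍ[ℝ]} (ha : Pc a) : Pc a⁻¹ := by
  rw [Quaternion.inv_def]
  exact ⟨by simp [ha.1], by simp [ha.2]⟩

lemma pj_inv {a : ℍ[ℝ]} (ha : Pj a) : Pj a⁻¹ := by
  rw [Quaternion.inv_def]
  exact ⟨by simp [ha.1], by simp [ha.2]⟩

lemma pc_comm {a b : ℍ[ℝ]} (ha : Pc a) (hb : Pc b) : a * b = b * a := by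
  obtain ⟨h1, h2⟩ := ha; obtain ⟨h3, h4⟩ := hb
  ext <;> simp [Quaternion.re_mul, Quaternion.imI_mul, Quaternion.imJ_mul,
    Quaternion.imK_mul, h1, h2, h3, h4] <;> ring

noncomputable def M : Subgroup (ℍ[ℝ])ˣ where
  carrier := {x : (ℍ[ℝ])ˣ | Pc x.val} ∪ {x : (ℍ[ℝ])ˣ | Pj x.val}
  one_mem' := Or.inl ⟨rfl, rfl⟩
  mul_mem' := by
    rintro x y (hx | hy) (hx' | hy')
    · exact Or.inl (pc_mul_pc hx hx')
    · exact Or.inr (pc_mul_pj hx hy')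
    · exact Or.inr (pj_mul_pc hy hx')
    · exact Or.inl (pj_mul_pj hy hy')
  inv_mem' := by
    rintro x (hx | hx)
    · exact Or.inl (by rw [Set.mem_setOf_eq, Units.val_inv_eq_inv_val]; exact pc_inv hx)
    · exact Or.inr (by rw [Set.mem_setOf_eq, Units.val_inv_eq_inv_val]; exact pj_inv hx)

noncomputable def Mc : Subgroup (ℍ[ℝ])ˣ where
  carrier := {x : (ℍ[ℝ])ˣ | Pc x.val}
  one_mem' := ⟨rfl, rfl⟩
  mul_mem' := fun hx hy => pc_mul_pc hx hy
  inv_mem' := fun hx => by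
    rw [Set.mem_setOf_eq, Units.val_inv_eq_inv_val]; exact pc_inv hx

lemma mem_M_iff {x : (ℍ[ℝ])ˣ} : x ∈ M ↔ Pc x.val ∨ Pj x.val := Iff.rfl

lemma comm_pc {g h : (ℍ[ℝ])ˣ} (hg : g ∈ M) (hh : h ∈ M) :
    Pc ((g * h * g⁻¹ * h⁻¹ : (ℍ[ℝ])ˣ).val) := by
  have hval : (g * h * g⁻¹ * h⁻¹ : (ℍ[ℝ])ˣ).val
      = (g.val * h.val) * (h.val * g.val)⁻¹ := by
    simp only [Units.val_mul, Units.val_inv_eq_inv_val]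
    rw [mul_inv_rev, mul_assoc]
  rw [hval]
  rcases hg with hg | hg <;> rcases hh with hh | hh
  · exact pc_mul_pc (pc_mul_pc hg hh) (pc_inv (pc_mul_pc hh hg))
  · exact pj_mul_pj (pc_mul_pj hg hh) (pj_inv (pj_mul_pc hh hg))
  · exact pj_mul_pj (pj_mul_pc hg hh) (pj_inv (pc_mul_pj hh hg))
  · exact pc_mul_pc (pj_mul_pj hg hh) (pc_inv (pj_mul_pj hh hg))

/-! ### basic quaternion elements -/

noncomputable def cQ (φ : ℝ) : ℍ[ℝ] := ⟨Real.cos φ, 0, Real.sin φ, 0⟩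
noncomputable def eQ (θ : ℝ) : ℍ[ℝ] := ⟨Real.cos θ, Real.sin θ, 0, 0⟩
def rQ (r : ℝ) : ℍ[ℝ] := ⟨r, 0, 0, 0⟩

lemma normSq_cQ (φ : ℝ) : normSq (cQ φ) = 1 := by
  rw [Quaternion.normSq_def', cQ]
  nlinarith [Real.sin_sq_add_cos_sq φ]

lemma normSq_eQ (θ : ℝ) : normSq (eQ θ) = 1 := by
  rw [Quaternion.normSq_def', eQ]
  nlinarith [Real.sin_sq_add_cos_sq θ]

lemma cQ_ne (φ : ℝ) : cQ φ ≠ 0 := by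
  intro h
  have := normSq_cQ φ
  rw [h] at this; simp at this

lemma eQ_ne (θ : ℝ) : eQ θ ≠ 0 := by
  intro h
  have := normSq_eQ θ
  rw [h] at this; simp at this

lemma rQ_ne {r : ℝ} (hr : r ≠ 0) : rQ r ≠ 0 := by
  intro h
  exact hr (by have := congrArg QuaternionAlgebra.re h; simpa [rQ] using this)

noncomputable def cU (φ : ℝ) : (ℍ[ℝ])ˣ := Units.mk0 (cQ φ) (cQ_ne φ)
noncomputable def eU (θ : ℝ) : (ℍ[ℝ])ˣ := Units.mk0 (eQ θ) (eQ_ne θ)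
noncomputable def rU (r : ℝ) (hr : r ≠ 0) : (ℍ[ℝ])ˣ := Units.mk0 (rQ r) (rQ_ne hr)

lemma eU_mem (θ : ℝ) : eU θ ∈ M := Or.inl ⟨rfl, rfl⟩
lemma rU_mem (r : ℝ) (hr : r ≠ 0) : rU r hr ∈ M := Or.inl ⟨rfl, rfl⟩

lemma prod4 (r θ1 φ θ2 : ℝ) :
    rQ r * eQ θ1 * cQ φ * eQ θ2 =
      (⟨r * Real.cos φ * Real.cos (θ1+θ2), r * Real.cos φ * Real.sin (θ1+θ2),
        r * Real.sin φ * Real.cos (θ1-θ2), r * Real.sin φ * Real.sin (θ1-θ2)⟩ : ℍ[ℝ]) := by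
  ext <;>
    simp only [Quaternion.re_mul, Quaternion.imI_mul, Quaternion.imJ_mul, Quaternion.imK_mul] <;>
    simp [rQ, eQ, cQ, Quaternion.re_mul, Quaternion.imI_mul, Quaternion.imJ_mul,
      Quaternion.imK_mul, Real.cos_add, Real.sin_add, Real.cos_sub, Real.sin_sub] <;> ring

lemma prod3 (α θ β : ℝ) :
    cQ α * eQ θ * cQ β =
      (⟨Real.cos θ * Real.cos (α+β), Real.sin θ * Real.cos (α-β),
        Real.cos θ * Real.sin (α+β), -(Real.sin θ * Real.sin (α-β))⟩ : ℍ[ℝ]) := by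
  ext <;>
    simp only [Quaternion.re_mul, Quaternion.imI_mul, Quaternion.imJ_mul, Quaternion.imK_mul] <;>
    simp [eQ, cQ, Quaternion.re_mul, Quaternion.imI_mul, Quaternion.imJ_mul,
      Quaternion.imK_mul, Real.cos_add, Real.sin_add, Real.cos_sub, Real.sin_sub] <;> ring

lemma polar (x y : ℝ) : ∃ θ : ℝ, x = Real.sqrt (x^2 + y^2) * Real.cos θ ∧
    y = Real.sqrt (x^2 + y^2) * Real.sin θ := by
  by_cases h : (x = 0 ∧ y = 0)
  · exact ⟨0, by simp [h.1, h.2]⟩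
  · set z : ℂ := ⟨x, y⟩ with hz
    have hz0 : z ≠ 0 := by
      intro h0
      exact h ⟨congrArg Complex.re h0, congrArg Complex.im h0⟩
    have habs : ‖z‖ = Real.sqrt (x^2 + y^2) := by
      rw [Complex.norm_def, Complex.normSq_apply]
      norm_num [hz]; ring_nf
    have habs0 : ‖z‖ ≠ 0 := by simpa using hz0
    refine ⟨Complex.arg z, ?_, ?_⟩
    · rw [Complex.cos_arg hz0, ← habs]
      field_simp
      rfl
    · rw [Complex.sin_arg, ← habs]
      field_simp
      rfl

lemma decomp {q : ℍ[ℝ]} (hq : q ≠ 0) {u : ℝ} (hu0 : 0 ≤ u)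
    (hu : u^2 * normSq q = q.re^2 + q.imI^2) :
    ∃ (r θ1 θ2 : ℝ), r ≠ 0 ∧ q = rQ r * eQ θ1 * cQ (Real.arccos u) * eQ θ2 := by
  have hn0 : (0:ℝ) < normSq q := by
    rcases lt_or_eq_of_le (Quaternion.normSq_nonneg (a := q)) with h | h
    · exact h
    · exact absurd (Quaternion.normSq_eq_zero.mp h.symm) hq
  have h4 : normSq q = q.re^2 + q.imI^2 + q.imJ^2 + q.imK^2 := Quaternion.normSq_def' q
  have hu2 : u^2 ≤ 1 := by
    have h := (mul_le_mul_iff_left₀ hn0).mp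
      (by nlinarith [sq_nonneg q.imJ, sq_nonneg q.imK] : u^2 * normSq q ≤ 1 * normSq q)
    exact h
  have hu1 : u ≤ 1 := by nlinarith
  set r := Real.sqrt (normSq q) with hrdef
  have hr2 : r^2 = normSq q := Real.sq_sqrt hn0.le
  have hr0 : 0 < r := Real.sqrt_pos.mpr hn0
  set zn := u * r with hzn
  have hzn0 : 0 ≤ zn := mul_nonneg hu0 hr0.le
  have hzn2 : zn^2 = q.re^2 + q.imI^2 := by rw [hzn]; nlinarith
  set wn := r * Real.sqrt (1 - u^2) with hwn
  have h1u : (0:ℝ) ≤ 1 - u^2 := by nlinarith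
  have hwn0 : 0 ≤ wn := mul_nonneg hr0.le (Real.sqrt_nonneg _)
  have hwn2 : wn^2 = q.imJ^2 + q.imK^2 := by
    rw [hwn, mul_pow, Real.sq_sqrt h1u]; nlinarith
  obtain ⟨sa, hsa1, hsa2⟩ := polar q.re q.imI
  obtain ⟨sb, hsb1, hsb2⟩ := polar q.imJ q.imK
  have hsqa : Real.sqrt (q.re^2 + q.imI^2) = zn := by
    rw [← hzn2, Real.sqrt_sq hzn0]
  have hsqb : Real.sqrt (q.imJ^2 + q.imK^2) = wn := by
    rw [← hwn2, Real.sqrt_sq hwn0]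
  rw [hsqa] at hsa1 hsa2
  rw [hsqb] at hsb1 hsb2
  refine ⟨r, (sa+sb)/2, (sa-sb)/2, hr0.ne', ?_⟩
  rw [prod4]
  have e1 : (sa+sb)/2 + (sa-sb)/2 = sa := by ring
  have e2 : (sa+sb)/2 - (sa-sb)/2 = sb := by ring
  have hca : Real.cos (Real.arccos u) = u := Real.cos_arccos (by linarith) hu1
  have hsa : Real.sin (Real.arccos u) = Real.sqrt (1 - u^2) := Real.sin_arccos u
  ext <;> dsimp only <;>
    simp only [e1, e2, hca, hsa, hsa1, hsa2, hsb1, hsb2, hzn, hwn] <;> ring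

section Nsub

variable {N : Subgroup (ℍ[ℝ])ˣ} (hN : M ≤ N)

lemma extract (hN : M ≤ N) {x : (ℍ[ℝ])ˣ} (hx : x ∈ N) {u : ℝ} (hu0 : 0 ≤ u)
    (hu : u^2 * normSq x.val = x.val.re^2 + x.val.imI^2) :
    cU (Real.arccos u) ∈ N := by
  obtain ⟨r, θ1, θ2, hr, heq⟩ := decomp (Units.ne_zero x) hu0 hu
  have hx_eq : x = rU r hr * eU θ1 * cU (Real.arccos u) * eU θ2 := by
    apply Units.ext
    simpa [rU, eU, cU, Units.val_mul] using heq
  have hc_eq : cU (Real.arccos u) = (eU θ1)⁻¹ * (rU r hr)⁻¹ * x * (eU θ2)⁻¹ := by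
    rw [hx_eq]; group
  rw [hc_eq]
  exact N.mul_mem (N.mul_mem (N.mul_mem (N.inv_mem (hN (eU_mem θ1)))
    (N.inv_mem (hN (rU_mem r hr)))) hx) (N.inv_mem (hN (eU_mem θ2)))

lemma step (hN : M ≤ N) {a b : ℝ} (ha0 : 0 ≤ a) (ha1 : a ≤ 1) (hb0 : 0 ≤ b) (hb1 : b ≤ 1)
    (hSa : cU (Real.arccos a) ∈ N) (hSb : cU (Real.arccos b) ∈ N)
    {v : ℝ} (hv0 : 0 ≤ v)
    (hP : (a*b - Real.sqrt (1-a^2) * Real.sqrt (1-b^2))^2 ≤ v^2)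
    (hQ : v^2 ≤ (a*b + Real.sqrt (1-a^2) * Real.sqrt (1-b^2))^2) :
    cU (Real.arccos v) ∈ N := by
  set A := Real.sqrt (1-a^2) * Real.sqrt (1-b^2) with hA
  set P := a*b - A with hPd
  set Q := a*b + A with hQd
  set t := (Q^2 - v^2)/(Q^2 - P^2) with htd
  have ht0 : 0 ≤ t := div_nonneg (by linarith) (by linarith)
  have ht1 : t ≤ 1 := by
    rcases eq_or_lt_of_le (le_trans hP hQ : P^2 ≤ Q^2) with he | hlt
    · rw [htd, ← he, sub_self, div_zero]; norm_num
    · rw [htd, div_le_one (by linarith)]; linarith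
  have hkey : t * P^2 + (1-t) * Q^2 = v^2 := by
    rcases eq_or_lt_of_le (le_trans hP hQ : P^2 ≤ Q^2) with he | hlt
    · have ht00 : t = 0 := by rw [htd, ← he, sub_self, div_zero]
      rw [ht00]
      have : v^2 = Q^2 := le_antisymm hQ (by rw [← he]; exact hP)
      rw [this]; ring
    · have hne : Q^2 - P^2 ≠ 0 := by linarith
      have h2 : t * (Q^2 - P^2) = Q^2 - v^2 := by
        rw [htd]; exact div_mul_cancel₀ _ hne
      linear_combination -h2
  set θ := Real.arccos (Real.sqrt t) with hθd
  have hst : Real.sqrt t ≤ 1 := Real.sqrt_le_one.mpr ht1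
  have hcosθ : Real.cos θ = Real.sqrt t :=
    Real.cos_arccos (le_trans (by norm_num) (Real.sqrt_nonneg t)) hst
  have hcos2 : Real.cos θ ^ 2 = t := by rw [hcosθ, Real.sq_sqrt ht0]
  have hsin2 : Real.sin θ ^ 2 = 1 - t := by
    have := Real.sin_sq_add_cos_sq θ
    linarith [hcos2]
  set α := Real.arccos a with hαd
  set β := Real.arccos b with hβd
  have hcα : Real.cos α = a := Real.cos_arccos (by linarith) ha1
  have hcβ : Real.cos β = b := Real.cos_arccos (by linarith) hb1
  have hsα : Real.sin α = Real.sqrt (1-a^2) := Real.sin_arccos a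
  have hsβ : Real.sin β = Real.sqrt (1-b^2) := Real.sin_arccos b
  have hcS : Real.cos (α + β) = P := by
    rw [Real.cos_add, hcα, hcβ, hsα, hsβ, hPd, hA]
  have hcD : Real.cos (α - β) = Q := by
    rw [Real.cos_sub, hcα, hcβ, hsα, hsβ, hQd, hA]
  set Y := cU α * eU θ * cU β with hYd
  have hYmem : Y ∈ N := N.mul_mem (N.mul_mem hSa (hN (eU_mem θ))) hSb
  have hYval : Y.val = cQ α * eQ θ * cQ β := by simp [hYd, cU, eU, Units.val_mul]
  have hYnorm : normSq Y.val = 1 := by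
    rw [hYval, map_mul, map_mul, normSq_cQ, normSq_eQ, normSq_cQ]; ring
  have hYre : Y.val.re = Real.cos θ * P := by rw [hYval, prod3, hcS]
  have hYimI : Y.val.imI = Real.sin θ * Q := by rw [hYval, prod3, hcD]
  apply extract hN hYmem hv0
  rw [hYnorm, hYre, hYimI, mul_pow, mul_pow, hcos2, hsin2]
  linarith [hkey]

lemma interval_step (hN : M ≤ N) {m : ℝ} (hm0 : 0 ≤ m) (hm1 : m ≤ 1)
    (hint : ∀ v : ℝ, 0 ≤ v → m ≤ v → v ≤ 1 → cU (Real.arccos v) ∈ N)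
    {w : ℝ} (hw0 : 0 ≤ w) (hw1 : w ≤ 1) (hw : (2*m^2 - 1)^2 ≤ w^2) :
    cU (Real.arccos w) ∈ N := by
  have hSm : cU (Real.arccos m) ∈ N := hint m hm0 le_rfl hm1
  have hAA : Real.sqrt (1-m^2) * Real.sqrt (1-m^2) = 1 - m^2 :=
    Real.mul_self_sqrt (by nlinarith)
  apply step hN hm0 hm1 hm0 hm1 hSm hSm hw0
  · rw [hAA]
    calc (m*m - (1-m^2))^2 = (2*m^2-1)^2 := by ring
    _ ≤ w^2 := hw
  · rw [hAA]
    calc w^2 ≤ 1^2 := by nlinarith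
    _ = (m*m + (1-m^2))^2 := by ring

lemma interval_ind (hN : M ≤ N) : ∀ n : ℕ, ∀ m : ℝ, 0 ≤ m →
    (∀ v : ℝ, 0 ≤ v → m ≤ v → v ≤ 1 → cU (Real.arccos v) ∈ N) →
    (1/2:ℝ)^n < 1 - m →
    ∀ v : ℝ, 0 ≤ v → v ≤ 1 → cU (Real.arccos v) ∈ N := by
  intro n
  induction n with
  | zero =>
    intro m hm0 _ hlt
    simp at hlt
    intro v _ _
    linarith
  | succ n ih =>
    intro m hm0 hint hlt v hv0 hv1
    have hm1 : m ≤ 1 := by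
      have : (0:ℝ) < (1/2:ℝ)^(n+1) := by positivity
      linarith
    rcases le_or_gt m (Real.sqrt 2 / 2) with hms | hms
    · -- use s = √2/2
      have hs0 : (0:ℝ) ≤ Real.sqrt 2 / 2 := by positivity
      have hs2 : (Real.sqrt 2 / 2)^2 = 1/2 := by
        rw [div_pow, Real.sq_sqrt (by norm_num : (0:ℝ) ≤ 2)]; norm_num
      have hs1 : Real.sqrt 2 / 2 ≤ 1 := by nlinarith
      have hint' : ∀ w : ℝ, 0 ≤ w → Real.sqrt 2/2 ≤ w → w ≤ 1 → cU (Real.arccos w) ∈ N :=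
        fun w h1 h2 h3 => hint w h1 (le_trans hms h2) h3
      apply interval_step hN hs0 hs1 hint' hv0 hv1
      rw [hs2]; norm_num
      positivity
    · -- m > √2/2 : shrink to m' = 2m²-1
      have hm2 : (1:ℝ)/2 < m^2 := by
        have h2 : (Real.sqrt 2 / 2)^2 = 1/2 := by
          rw [div_pow, Real.sq_sqrt (by norm_num : (0:ℝ) ≤ 2)]; norm_num
        nlinarith [Real.sqrt_nonneg 2]
      set m' := 2*m^2 - 1 with hm'd
      have hm'0 : 0 ≤ m' := by rw [hm'd]; linarith
      have hm'1 : m' ≤ 1 := by nlinarith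
      have hint' : ∀ v : ℝ, 0 ≤ v → m' ≤ v → v ≤ 1 → cU (Real.arccos v) ∈ N := by
        intro w hw0 hw1 hw2
        apply interval_step hN hm0 hm1 hint hw0 hw2
        rw [← hm'd]; nlinarith
      have hlt' : (1/2:ℝ)^n < 1 - m' := by
        have : 1 - m' = 2*(1-m^2) := by rw [hm'd]; ring
        rw [this]
        have hp : (1/2:ℝ)^(n+1) = (1/2:ℝ)^n / 2 := by rw [pow_succ]; ring
        nlinarith
      exact ih m' hm'0 hint' hlt' v hv0 hv1

end Nsub

end QMax

open QMax

set_option maxHeartbeats 1000000 in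
/-- In the real quaternions, `ℂ* ∪ ℂ*j` (where `ℂ = ℝ + ℝi` and `ℂ*j` consists
of the quaternions with zero real and `i`-parts) is a maximal subgroup of
`ℍ*` which is metabelian but not abelian. -/
theorem complex_union_complex_j_maximal_metabelian_not_abelian :
    ∃ M : Subgroup (ℍ[ℝ])ˣ,
      (M : Set (ℍ[ℝ])ˣ) =
        {x : (ℍ[ℝ])ˣ | x.val.imJ = 0 ∧ x.val.imK = 0} ∪
        {x : (ℍ[ℝ])ˣ | x.val.re = 0 ∧ x.val.imI = 0} ∧
      IsCoatom M ∧
      (∀ a b : (commutator M), a * b = b * a) ∧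
      ¬ (∀ a b : M, a * b = b * a) := by
  refine ⟨QMax.M, rfl, ?_, ?_, ?_⟩
  · -- IsCoatom
    constructor
    · -- M ≠ ⊤
      intro htop
      have hne : ((⟨1,0,1,0⟩ : ℍ[ℝ])) ≠ 0 := by
        intro h
        have := congrArg QuaternionAlgebra.re h
        simp at this
      have hmem : Units.mk0 _ hne ∈ QMax.M := htop ▸ Subgroup.mem_top _
      rcases hmem with h | h
      · exact one_ne_zero h.1
      · exact one_ne_zero h.1
    · -- maximality
      intro N hlt
      have hN : QMax.M ≤ N := hlt.le
      obtain ⟨q, hqN, hqM⟩ := SetLike.exists_of_lt hlt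
      obtain ⟨hPc, hPj⟩ := not_or.mp hqM
      have hq0 : q.val ≠ 0 := Units.ne_zero q
      have hn0 : (0:ℝ) < normSq q.val := by
        rcases lt_or_eq_of_le (Quaternion.normSq_nonneg (a := q.val)) with h | h
        · exact h
        · exact absurd (Quaternion.normSq_eq_zero.mp h.symm) hq0
      have h4 : normSq q.val = q.val.re^2 + q.val.imI^2 + q.val.imJ^2 + q.val.imK^2 :=
        Quaternion.normSq_def' q.val
      have he : 0 < q.val.re^2 + q.val.imI^2 := by
        rcases not_and_or.mp hPj with h | h
        · nlinarith [sq_pos_of_ne_zero h, sq_nonneg q.val.imI]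
        · nlinarith [sq_pos_of_ne_zero h, sq_nonneg q.val.re]
      have hf : 0 < q.val.imJ^2 + q.val.imK^2 := by
        rcases not_and_or.mp hPc with h | h
        · nlinarith [sq_pos_of_ne_zero h, sq_nonneg q.val.imK]
        · nlinarith [sq_pos_of_ne_zero h, sq_nonneg q.val.imJ]
      set u0 := Real.sqrt ((q.val.re^2 + q.val.imI^2) / normSq q.val) with hu0d
      have hu00 : 0 ≤ u0 := Real.sqrt_nonneg _
      have hu0sq : u0^2 = (q.val.re^2 + q.val.imI^2) / normSq q.val :=
        Real.sq_sqrt (div_nonneg he.le hn0.le)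
      have hueq : u0^2 * normSq q.val = q.val.re^2 + q.val.imI^2 := by
        rw [hu0sq]; field_simp
      have hSu0 : QMax.cU (Real.arccos u0) ∈ N := QMax.extract hN hqN hu00 hueq
      have hu0pos : 0 < u0 := Real.sqrt_pos.mpr (div_pos he hn0)
      have hu0lt : u0 < 1 := by
        have h1 : u0^2 < 1 := by
          rw [hu0sq, div_lt_one hn0]; nlinarith
        nlinarith
      set m0 := |2*u0^2 - 1| with hm0d
      have hm00 : 0 ≤ m0 := abs_nonneg _
      have hm01 : m0 < 1 := abs_lt.mpr ⟨by nlinarith, by nlinarith⟩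
      have hAA : Real.sqrt (1-u0^2) * Real.sqrt (1-u0^2) = 1 - u0^2 :=
        Real.mul_self_sqrt (by nlinarith)
      have hint : ∀ v : ℝ, 0 ≤ v → m0 ≤ v → v ≤ 1 →
          QMax.cU (Real.arccos v) ∈ N := by
        intro v hv0 hv1 hv2
        apply QMax.step hN hu00 hu0lt.le hu00 hu0lt.le hSu0 hSu0 hv0
        · rw [hAA]
          have : (u0*u0 - (1-u0^2)) = 2*u0^2-1 := by ring
          rw [this]
          have habs : (2*u0^2-1)^2 = m0^2 := (sq_abs _).symm
          rw [habs]
          nlinarith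
        · rw [hAA]
          have : (u0*u0 + (1-u0^2)) = 1 := by ring
          rw [this]
          nlinarith
      obtain ⟨k, hk⟩ := exists_pow_lt_of_lt_one
        (show (0:ℝ) < 1 - m0 by linarith) (by norm_num : (1/2:ℝ) < 1)
      have hall := QMax.interval_ind hN k m0 hm00 hint hk
      rw [Subgroup.eq_top_iff']
      intro x
      have hx0 : x.val ≠ 0 := Units.ne_zero x
      have hxn0 : (0:ℝ) < normSq x.val := by
        rcases lt_or_eq_of_le (Quaternion.normSq_nonneg (a := x.val)) with h | h
        · exact h
        · exact absurd (Quaternion.normSq_eq_zero.mp h.symm) hx0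
      have hx4 : normSq x.val = x.val.re^2 + x.val.imI^2 + x.val.imJ^2 + x.val.imK^2 :=
        Quaternion.normSq_def' x.val
      set u := Real.sqrt ((x.val.re^2 + x.val.imI^2) / normSq x.val) with hud
      have hu0' : 0 ≤ u := Real.sqrt_nonneg _
      have husq : u^2 = (x.val.re^2 + x.val.imI^2) / normSq x.val :=
        Real.sq_sqrt (div_nonneg (by positivity) hxn0.le)
      have hueq' : u^2 * normSq x.val = x.val.re^2 + x.val.imI^2 := by
        rw [husq]; field_simp
      have hu1' : u ≤ 1 := by
        have h1 : u^2 ≤ 1 := by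
          rw [husq, div_le_one hxn0]; nlinarith [sq_nonneg x.val.imJ, sq_nonneg x.val.imK]
        nlinarith
      obtain ⟨r, θ1, θ2, hr, heq⟩ := QMax.decomp hx0 hu0' hueq'
      have hx_eq : x = QMax.rU r hr * QMax.eU θ1 * QMax.cU (Real.arccos u) * QMax.eU θ2 := by
        apply Units.ext
        simpa [QMax.rU, QMax.eU, QMax.cU, Units.val_mul] using heq
      rw [hx_eq]
      exact N.mul_mem (N.mul_mem (N.mul_mem (hN (QMax.rU_mem r hr)) (hN (QMax.eU_mem θ1)))
        (hall u hu0' hu1')) (hN (QMax.eU_mem θ2))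
  · -- metabelian
    have hle : commutator ↥QMax.M ≤ QMax.Mc.comap QMax.M.subtype := by
      rw [commutator_def, Subgroup.commutator_le]
      intro g _ h _
      rw [Subgroup.mem_comap]
      have hc := QMax.comm_pc g.2 h.2
      show QMax.Pc _
      simpa [commutatorElement_def] using hc
    intro a b
    have ha : QMax.Pc (((a : ↥QMax.M) : (ℍ[ℝ])ˣ)).val := by
      have := hle a.2
      rw [Subgroup.mem_comap] at this
      exact this
    have hb : QMax.Pc (((b : ↥QMax.M) : (ℍ[ℝ])ˣ)).val := by
      have := hle b.2
      rw [Subgroup.mem_comap] at this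
      exact this
    refine Subtype.ext (Subtype.ext (Units.ext ?_))
    simp only [MulMemClass.coe_mul, Units.val_mul]
    exact QMax.pc_comm ha hb
  · -- not abelian
    intro hab
    have hiine : ((⟨0,1,0,0⟩ : ℍ[ℝ])) ≠ 0 := by
      intro h; have := congrArg QuaternionAlgebra.imI h; simp at this
    have hjjne : ((⟨0,0,1,0⟩ : ℍ[ℝ])) ≠ 0 := by
      intro h; have := congrArg QuaternionAlgebra.imJ h; simp at this
    have hiimem : Units.mk0 _ hiine ∈ QMax.M := Or.inl ⟨rfl, rfl⟩
    have hjjmem : Units.mk0 _ hjjne ∈ QMax.M := Or.inr ⟨rfl, rfl⟩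
    have h := hab ⟨Units.mk0 _ hiine, hiimem⟩ ⟨Units.mk0 _ hjjne, hjjmem⟩
    have h2 := congrArg (fun t => ((t : ↥QMax.M) : (ℍ[ℝ])ˣ).val.imK) h
    simp only [MulMemClass.coe_mul, Units.val_mul, Units.val_mk0] at h2
    rw [Quaternion.imK_mul, Quaternion.imK_mul] at h2
    have h3 : (0:ℝ)*0 + 1*1 - 0*0 + 0*0 = 0*0 + 0*0 - 1*1 + 0*0 := h2
    norm_num at h3
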